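/- (Matsuo–Cherednik, antisymmetrization) Let n ≥ 2, κ ∈ ℂ, λ_1,…,λ_n ∈ ℂ, and let U ⊆ ℂ^n be an open set on which z_i ≠ z_j for all i ≠ j. Suppose holomorphic functions I_σ : U → ℂ, indexed by σ ∈ S_n, satisfy the KZ equations in components: ∂_i I_σ = κ Σ_{j ≠ i} I_{σ∘(i j)} / (z_i − z_j) + λ_{σ(i)} I_σ for all i = 1,…,n and all σ ∈ S_n. Then ψ = Σ_{σ ∈ S_n} (−1)^σ I_σ satisfies −Δψ + κ(κ+1) Σ_{i ≠ j} ψ/(z_i − z_j)^2 = E ψ on U, where Δ = ∂_1^2 + ⋯ + ∂_n^2 and E = −(λ_1^2 + ⋯ + λ_n^2). -/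

import Mathlib

open Finset

/-- Partial derivative `∂_i` of a function of `n` complex variables. -/
noncomputable def partialDeriv {n : ℕ} (i : Fin n) (f : (Fin n → ℂ) → ℂ) :
    (Fin n → ℂ) → ℂ :=
  fun z => fderiv ℂ f z (Pi.single i 1)

lemma pd_congr_nhds {n : ℕ} {f g : (Fin n → ℂ) → ℂ} {z : Fin n → ℂ} (i : Fin n)
    (h : f =ᶠ[nhds z] g) : partialDeriv i f z = partialDeriv i g z := by
  unfold partialDeriv; rw [h.fderiv_eq]

lemma pd_sum_const_mul {n : ℕ} {ι : Type*} (s : Finset ι)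
    (c : ι → ℂ) (f : ι → (Fin n → ℂ) → ℂ) (i : Fin n) (z : Fin n → ℂ)
    (hf : ∀ σ ∈ s, DifferentiableAt ℂ (f σ) z) :
    partialDeriv i (fun w => ∑ σ ∈ s, c σ * f σ w) z
      = ∑ σ ∈ s, c σ * partialDeriv i (f σ) z := by
  unfold partialDeriv
  have h1 : ∀ σ ∈ s, DifferentiableAt ℂ (fun w => c σ * f σ w) z :=
    fun σ hσ => (hf σ hσ).const_mul _
  rw [fderiv_fun_sum h1, ContinuousLinearMap.sum_apply]
  refine Finset.sum_congr rfl fun σ hσ => ?_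
  rw [fderiv_const_mul (hf σ hσ), ContinuousLinearMap.smul_apply, smul_eq_mul]

lemma pd_div_sub {n : ℕ} (f : (Fin n → ℂ) → ℂ) (i j : Fin n) (hij : j ≠ i)
    (z : Fin n → ℂ) (hf : DifferentiableAt ℂ f z) (hz : z i ≠ z j) :
    partialDeriv i (fun w => f w / (w i - w j)) z
      = partialDeriv i f z / (z i - z j) - f z / (z i - z j) ^ 2 := by
  have hi : HasFDerivAt (fun w : Fin n → ℂ => w i)
      (ContinuousLinearMap.proj (R := ℂ) (φ := fun _ : Fin n => ℂ) i) z :=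
    hasFDerivAt_apply i z
  have hj : HasFDerivAt (fun w : Fin n → ℂ => w j)
      (ContinuousLinearMap.proj (R := ℂ) (φ := fun _ : Fin n => ℂ) j) z :=
    hasFDerivAt_apply j z
  have hd := hi.sub hj
  have hne : z i - z j ≠ 0 := sub_ne_zero.mpr hz
  have hinv := (hasDerivAt_inv hne).comp_hasFDerivAt z hd
  have h := hf.hasFDerivAt.mul hinv
  have heq : (fun w : Fin n → ℂ => f w / (w i - w j))
      = fun w : Fin n → ℂ => f w * (w i - w j)⁻¹ := by
    funext w; rw [div_eq_mul_inv]
  have h2 : HasFDerivAt (fun w : Fin n → ℂ => f w * (w i - w j)⁻¹)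
      (f z • -((z i - z j) ^ 2)⁻¹ • (ContinuousLinearMap.proj i - ContinuousLinearMap.proj j) +
        (z i - z j)⁻¹ • fderiv ℂ f z) z := h
  rw [partialDeriv, heq, h2.fderiv]
  simp only [ContinuousLinearMap.add_apply, ContinuousLinearMap.smul_apply,
    ContinuousLinearMap.sub_apply, ContinuousLinearMap.proj_apply, smul_eq_mul,
    Pi.single_eq_same, Pi.single_eq_of_ne hij]
  rw [partialDeriv]
  field_simp
  ring

lemma pd_comb {n : ℕ} {ι : Type*} (s : Finset ι) (κ : ℂ)
    (g : (Fin n → ℂ) → ℂ) (f : ι → (Fin n → ℂ) → ℂ) (i : Fin n) (z : Fin n → ℂ)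
    (hg : DifferentiableAt ℂ g z) (hf : ∀ j ∈ s, DifferentiableAt ℂ (f j) z) :
    partialDeriv i (fun w => g w - κ * ∑ j ∈ s, f j w) z
      = partialDeriv i g z - κ * ∑ j ∈ s, partialDeriv i (f j) z := by
  unfold partialDeriv
  have hs : DifferentiableAt ℂ (fun w => ∑ j ∈ s, f j w) z :=
    DifferentiableAt.fun_sum hf
  rw [fderiv_fun_sub hg (hs.const_mul κ), ContinuousLinearMap.sub_apply,
    fderiv_const_mul hs, ContinuousLinearMap.smul_apply, smul_eq_mul,
    fderiv_fun_sum hf, ContinuousLinearMap.sum_apply]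

lemma erase_eq_filt {n : ℕ} (i : Fin n) :
    (univ : Finset (Fin n)).erase i = univ.filter (fun j => i ≠ j) := by
  ext j; simp [mem_erase, ne_comm]

lemma erase2_eq_filt {n : ℕ} (i j : Fin n) :
    ((univ : Finset (Fin n)).erase i).erase j
      = univ.filter (fun k => i ≠ k ∧ j ≠ k) := by
  ext k; simp [mem_erase]; tauto

lemma nested_to_prod {n : ℕ} (g : Fin n → Fin n → ℂ) :
    ∑ i : Fin n, ∑ j ∈ univ.erase i, g i j
      = ∑ p : Fin n × Fin n, (if p.1 ≠ p.2 then g p.1 p.2 else 0) := by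
  rw [Fintype.sum_prod_type]
  refine Finset.sum_congr rfl fun i _ => ?_
  rw [erase_eq_filt, Finset.sum_filter]

lemma antisym_sum_zero {n : ℕ} (g : Fin n → Fin n → ℂ)
    (h : ∀ i j, g j i = - g i j) :
    ∑ i : Fin n, ∑ j ∈ univ.erase i, g i j = 0 := by
  rw [nested_to_prod]
  set S := ∑ p : Fin n × Fin n, (if p.1 ≠ p.2 then g p.1 p.2 else 0) with hS
  have h1 : S = ∑ p : Fin n × Fin n, (if p.2 ≠ p.1 then g p.2 p.1 else 0) := by
    rw [hS, ← Equiv.sum_comp (Equiv.prodComm (Fin n) (Fin n))]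
    rfl
  have h2 : S = -S := by
    nth_rewrite 1 [h1]
    rw [← Finset.sum_neg_distrib]
    refine Finset.sum_congr rfl fun p _ => ?_
    by_cases hp : p.1 ≠ p.2
    · rw [if_pos (Ne.symm hp), if_pos hp, h]
    · rw [if_neg (fun hq => hp (Ne.symm hq)), if_neg hp, neg_zero]
  have : (2 : ℂ) * S = 0 := by linear_combination h2
  simpa using this

lemma triple_zero {n : ℕ} (w : Fin n → ℂ) (hw : ∀ i j : Fin n, i ≠ j → w i ≠ w j) :
    ∑ i : Fin n, ∑ j ∈ univ.erase i, ∑ k ∈ (univ.erase i).erase j,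
      ((w i - w k) * (w i - w j))⁻¹ = 0 := by
  set P : Fin n × Fin n × Fin n → ℂ := fun p =>
    if p.1 ≠ p.2.1 ∧ p.1 ≠ p.2.2 ∧ p.2.1 ≠ p.2.2 then
      ((w p.1 - w p.2.2) * (w p.1 - w p.2.1))⁻¹ else 0 with hP
  have hconv : ∑ i : Fin n, ∑ j ∈ univ.erase i, ∑ k ∈ (univ.erase i).erase j,
      ((w i - w k) * (w i - w j))⁻¹ = ∑ p : Fin n × Fin n × Fin n, P p := by
    rw [Fintype.sum_prod_type]
    refine Finset.sum_congr rfl fun i _ => ?_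
    rw [Fintype.sum_prod_type]
    have step : ∀ j : Fin n, ∑ k : Fin n, P (i, j, k)
        = if i ≠ j then ∑ k ∈ (univ.erase i).erase j,
            ((w i - w k) * (w i - w j))⁻¹ else 0 := by
      intro j
      by_cases hij : i ≠ j
      · rw [if_pos hij, erase2_eq_filt, Finset.sum_filter]
        refine Finset.sum_congr rfl fun k _ => ?_
        simp only [hP]
        by_cases h1 : i ≠ k <;> by_cases h2 : j ≠ k <;> simp [h1, h2, hij]
      · rw [if_neg hij]
        refine Finset.sum_eq_zero fun k _ => ?_
        simp only [hP]
        rw [if_neg (by tauto)]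
    rw [Finset.sum_congr rfl fun j _ => step j, ← Finset.sum_filter, ← erase_eq_filt]
  rw [hconv]
  set e3 : (Fin n × Fin n × Fin n) ≃ (Fin n × Fin n × Fin n) :=
    ⟨fun p => (p.2.1, p.2.2, p.1), fun p => (p.2.2, p.1, p.2.1),
      fun p => rfl, fun p => rfl⟩ with he3
  set S := ∑ p : Fin n × Fin n × Fin n, P p with hSdef
  have h1 : S = ∑ p : Fin n × Fin n × Fin n, P (e3 p) := (Equiv.sum_comp e3 P).symm
  have h2 : S = ∑ p : Fin n × Fin n × Fin n, P (e3 (e3 p)) := by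
    rw [h1, ← Equiv.sum_comp e3 (fun p => P (e3 p))]
  have h3 : S + S + S = 0 := by
    nth_rewrite 2 [h1]
    nth_rewrite 2 [h2]
    rw [← Finset.sum_add_distrib, ← Finset.sum_add_distrib]
    refine Finset.sum_eq_zero fun p _ => ?_
    obtain ⟨i, j, k⟩ := p
    simp only [hP, he3, Equiv.coe_fn_mk]
    by_cases hd : i ≠ j ∧ i ≠ k ∧ j ≠ k
    · obtain ⟨hij, hik, hjk⟩ := hd
      rw [if_pos ⟨hij, hik, hjk⟩, if_pos ⟨hjk, Ne.symm hij, Ne.symm hik⟩,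
        if_pos ⟨Ne.symm hik, Ne.symm hjk, hij⟩]
      have hA : w i - w j ≠ 0 := sub_ne_zero.mpr (hw i j hij)
      have hB : w i - w k ≠ 0 := sub_ne_zero.mpr (hw i k hik)
      have hC : w j - w k ≠ 0 := sub_ne_zero.mpr (hw j k hjk)
      have hD : w j - w i ≠ 0 := sub_ne_zero.mpr (Ne.symm (hw i j hij))
      have hE : w k - w i ≠ 0 := sub_ne_zero.mpr (Ne.symm (hw i k hik))
      have hF : w k - w j ≠ 0 := sub_ne_zero.mpr (Ne.symm (hw j k hjk))
      field_simp
      ring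
    · push_neg at hd
      rw [if_neg (by tauto), if_neg (by tauto), if_neg (by tauto)]
      norm_num
  have h30 : (3 : ℂ) * S = 0 := by linear_combination h3
  exact (mul_eq_zero.mp h30).resolve_left (by norm_num)

lemma comb_sum {ι : Type*} [DecidableEq ι] (s : Finset ι) (κ Fi S Ψ L : ℂ)
    (Fj d : ι → ℂ) :
    (L - κ * ∑ j ∈ s, Fj j / d j)
      - κ * ∑ j ∈ s, ((Fi - κ * S) / d j - Ψ / d j ^ 2)
    = κ ^ 2 * ∑ j ∈ s, S / d j - κ * ∑ j ∈ s, (Fi + Fj j) / d j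
      + κ * ∑ j ∈ s, Ψ / d j ^ 2 + L := by
  induction s using Finset.induction_on with
  | empty => simp
  | insert _ _ h ih =>
    simp only [Finset.sum_insert h]
    linear_combination ih

lemma sign_mul_swap {n : ℕ} (i j : Fin n) (hij : i ≠ j) (τ : Equiv.Perm (Fin n)) :
    ((Equiv.Perm.sign (τ * Equiv.swap i j) : ℤ) : ℂ)
      = -((Equiv.Perm.sign τ : ℤ) : ℂ) := by
  rw [map_mul, Equiv.Perm.sign_swap hij]
  push_cast
  ring

lemma reindex_swap {n : ℕ} (I : Equiv.Perm (Fin n) → (Fin n → ℂ) → ℂ)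
    (c : Equiv.Perm (Fin n) → ℂ) (i j : Fin n) (w : Fin n → ℂ) :
    ∑ σ : Equiv.Perm (Fin n), c σ * I (σ * Equiv.swap i j) w
      = ∑ τ : Equiv.Perm (Fin n), c (τ * Equiv.swap i j) * I τ w := by
  refine Fintype.sum_equiv (Equiv.mulRight (Equiv.swap i j)) _ _ fun σ => ?_
  simp only [Equiv.coe_mulRight]
  congr 2
  rw [mul_assoc, Equiv.swap_mul_self, mul_one]

section KZ

variable {n : ℕ} {κ : ℂ} {lam : Fin n → ℂ} {U : Set (Fin n → ℂ)}
  {I : Equiv.Perm (Fin n) → (Fin n → ℂ) → ℂ}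

lemma KZsum
    (hKZ : ∀ σ : Equiv.Perm (Fin n), ∀ i : Fin n, ∀ z ∈ U,
      partialDeriv i (I σ) z =
        κ * ∑ j ∈ univ.erase i, I (σ * Equiv.swap i j) z / (z i - z j) +
          lam (σ i) * I σ z)
    (c : Equiv.Perm (Fin n) → ℂ) (i : Fin n) (z : Fin n → ℂ) (hz : z ∈ U) :
    ∑ σ : Equiv.Perm (Fin n), c σ * partialDeriv i (I σ) z
      = κ * ∑ j ∈ univ.erase i,
          (∑ τ : Equiv.Perm (Fin n), c (τ * Equiv.swap i j) * I τ z) / (z i - z j)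
        + ∑ σ : Equiv.Perm (Fin n), c σ * (lam (σ i) * I σ z) := by
  calc ∑ σ : Equiv.Perm (Fin n), c σ * partialDeriv i (I σ) z
      = ∑ σ : Equiv.Perm (Fin n), ((∑ j ∈ univ.erase i,
          κ * (c σ * I (σ * Equiv.swap i j) z / (z i - z j)))
          + c σ * (lam (σ i) * I σ z)) := by
        refine Finset.sum_congr rfl fun σ _ => ?_
        rw [hKZ σ i z hz, mul_add]
        congr 1
        rw [Finset.mul_sum, Finset.mul_sum]
        exact Finset.sum_congr rfl fun j _ => by ring
    _ = (∑ σ : Equiv.Perm (Fin n), ∑ j ∈ univ.erase i,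
          κ * (c σ * I (σ * Equiv.swap i j) z / (z i - z j)))
          + ∑ σ : Equiv.Perm (Fin n), c σ * (lam (σ i) * I σ z) :=
        Finset.sum_add_distrib
    _ = _ := by
        congr 1
        rw [Finset.sum_comm, Finset.mul_sum]
        refine Finset.sum_congr rfl fun j _ => ?_
        rw [← reindex_swap I c i j z, Finset.sum_div, Finset.mul_sum]

lemma stepA (hU : IsOpen U)
    (hhol : ∀ σ, DifferentiableOn ℂ (I σ) U)
    (hKZ : ∀ σ : Equiv.Perm (Fin n), ∀ i : Fin n, ∀ z ∈ U,
      partialDeriv i (I σ) z =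
        κ * ∑ j ∈ univ.erase i, I (σ * Equiv.swap i j) z / (z i - z j) +
          lam (σ i) * I σ z)
    (i : Fin n) (w : Fin n → ℂ) (hw : w ∈ U) :
    partialDeriv i (fun v => ∑ σ : Equiv.Perm (Fin n),
        ((Equiv.Perm.sign σ : ℤ) : ℂ) * I σ v) w
      = (∑ σ : Equiv.Perm (Fin n),
          ((Equiv.Perm.sign σ : ℤ) : ℂ) * (lam (σ i) * I σ w))
        - κ * ∑ j ∈ univ.erase i,
            (∑ σ : Equiv.Perm (Fin n), ((Equiv.Perm.sign σ : ℤ) : ℂ) * I σ w)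
              / (w i - w j) := by
  have hdiff : ∀ σ ∈ (univ : Finset (Equiv.Perm (Fin n))), DifferentiableAt ℂ (I σ) w :=
    fun σ _ => (hhol σ).differentiableAt (hU.mem_nhds hw)
  rw [pd_sum_const_mul univ _ I i w hdiff,
    KZsum hKZ (fun σ => ((Equiv.Perm.sign σ : ℤ) : ℂ)) i w hw]
  have hinner : ∀ j ∈ univ.erase i,
      (∑ τ : Equiv.Perm (Fin n),
        ((Equiv.Perm.sign (τ * Equiv.swap i j) : ℤ) : ℂ) * I τ w) / (w i - w j)
      = -((∑ σ : Equiv.Perm (Fin n), ((Equiv.Perm.sign σ : ℤ) : ℂ) * I σ w)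
          / (w i - w j)) := by
    intro j hj
    have hij : i ≠ j := Ne.symm (Finset.mem_erase.mp hj).1
    have hs : (∑ τ : Equiv.Perm (Fin n),
        ((Equiv.Perm.sign (τ * Equiv.swap i j) : ℤ) : ℂ) * I τ w)
        = -(∑ σ : Equiv.Perm (Fin n), ((Equiv.Perm.sign σ : ℤ) : ℂ) * I σ w) := by
      rw [← Finset.sum_neg_distrib]
      exact Finset.sum_congr rfl fun τ _ => by
        rw [sign_mul_swap i j hij τ]; ring
    rw [hs, neg_div]
  rw [Finset.sum_congr rfl hinner, Finset.sum_neg_distrib]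
  ring

lemma stepF (hU : IsOpen U)
    (hhol : ∀ σ, DifferentiableOn ℂ (I σ) U)
    (hKZ : ∀ σ : Equiv.Perm (Fin n), ∀ i : Fin n, ∀ z ∈ U,
      partialDeriv i (I σ) z =
        κ * ∑ j ∈ univ.erase i, I (σ * Equiv.swap i j) z / (z i - z j) +
          lam (σ i) * I σ z)
    (i : Fin n) (w : Fin n → ℂ) (hw : w ∈ U) :
    partialDeriv i (fun v => ∑ σ : Equiv.Perm (Fin n),
        ((Equiv.Perm.sign σ : ℤ) : ℂ) * (lam (σ i) * I σ v)) w
      = (∑ σ : Equiv.Perm (Fin n),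
          ((Equiv.Perm.sign σ : ℤ) : ℂ) * (lam (σ i) * (lam (σ i) * I σ w)))
        - κ * ∑ j ∈ univ.erase i,
            (∑ σ : Equiv.Perm (Fin n),
              ((Equiv.Perm.sign σ : ℤ) : ℂ) * (lam (σ j) * I σ w)) / (w i - w j) := by
  have hdiff : ∀ σ ∈ (univ : Finset (Equiv.Perm (Fin n))), DifferentiableAt ℂ (I σ) w :=
    fun σ _ => (hhol σ).differentiableAt (hU.mem_nhds hw)
  have hfun : (fun v => ∑ σ : Equiv.Perm (Fin n),
      ((Equiv.Perm.sign σ : ℤ) : ℂ) * (lam (σ i) * I σ v))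
      = fun v => ∑ σ : Equiv.Perm (Fin n),
        (((Equiv.Perm.sign σ : ℤ) : ℂ) * lam (σ i)) * I σ v := by
    funext v; exact Finset.sum_congr rfl fun σ _ => by ring
  rw [hfun, pd_sum_const_mul univ _ I i w hdiff,
    KZsum hKZ (fun σ => ((Equiv.Perm.sign σ : ℤ) : ℂ) * lam (σ i)) i w hw]
  have hinner : ∀ j ∈ univ.erase i,
      (∑ τ : Equiv.Perm (Fin n),
        (((Equiv.Perm.sign (τ * Equiv.swap i j) : ℤ) : ℂ)
          * lam ((τ * Equiv.swap i j) i)) * I τ w) / (w i - w j)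
      = -((∑ σ : Equiv.Perm (Fin n),
            ((Equiv.Perm.sign σ : ℤ) : ℂ) * (lam (σ j) * I σ w)) / (w i - w j)) := by
    intro j hj
    have hij : i ≠ j := Ne.symm (Finset.mem_erase.mp hj).1
    have happ : ∀ τ : Equiv.Perm (Fin n), (τ * Equiv.swap i j) i = τ j := by
      intro τ
      rw [Equiv.Perm.mul_apply, Equiv.swap_apply_left]
    have hs : (∑ τ : Equiv.Perm (Fin n),
        (((Equiv.Perm.sign (τ * Equiv.swap i j) : ℤ) : ℂ)
          * lam ((τ * Equiv.swap i j) i)) * I τ w)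
        = -(∑ σ : Equiv.Perm (Fin n),
            ((Equiv.Perm.sign σ : ℤ) : ℂ) * (lam (σ j) * I σ w)) := by
      rw [← Finset.sum_neg_distrib]
      exact Finset.sum_congr rfl fun τ _ => by
        rw [sign_mul_swap i j hij τ, happ τ]; ring
    rw [hs, neg_div]
  rw [Finset.sum_congr rfl hinner, Finset.sum_neg_distrib]
  have hsecond : ∑ σ : Equiv.Perm (Fin n),
      (((Equiv.Perm.sign σ : ℤ) : ℂ) * lam (σ i)) * (lam (σ i) * I σ w)
      = ∑ σ : Equiv.Perm (Fin n),
        ((Equiv.Perm.sign σ : ℤ) : ℂ) * (lam (σ i) * (lam (σ i) * I σ w)) :=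
    Finset.sum_congr rfl fun σ _ => by ring
  rw [hsecond]
  ring

end KZ


theorem matsuo_cherednik_antisymmetrization
    (n : ℕ) (hn : 2 ≤ n) (κ : ℂ) (lam : Fin n → ℂ)
    (U : Set (Fin n → ℂ)) (hU : IsOpen U)
    (hsep : ∀ z ∈ U, ∀ i j : Fin n, i ≠ j → z i ≠ z j)
    (I : Equiv.Perm (Fin n) → (Fin n → ℂ) → ℂ)
    (hhol : ∀ σ, DifferentiableOn ℂ (I σ) U)
    (hKZ : ∀ σ : Equiv.Perm (Fin n), ∀ i : Fin n, ∀ z ∈ U,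
      partialDeriv i (I σ) z =
        κ * ∑ j ∈ univ.erase i, I (σ * Equiv.swap i j) z / (z i - z j) +
          lam (σ i) * I σ z) :
    ∀ z ∈ U,
      -(∑ i : Fin n, partialDeriv i (partialDeriv i
          (fun w => ∑ σ : Equiv.Perm (Fin n), ((Equiv.Perm.sign σ : ℤ) : ℂ) * I σ w)) z) +
        κ * (κ + 1) * ∑ i : Fin n, ∑ j ∈ univ.erase i,
          (∑ σ : Equiv.Perm (Fin n), ((Equiv.Perm.sign σ : ℤ) : ℂ) * I σ z) / (z i - z j) ^ 2 =
      (-(∑ i : Fin n, lam i ^ 2)) *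
        ∑ σ : Equiv.Perm (Fin n), ((Equiv.Perm.sign σ : ℤ) : ℂ) * I σ z := by
  intro z hz
  have hzsep : ∀ i j : Fin n, i ≠ j → z i ≠ z j := hsep z hz
  have hdiffat : ∀ (σ : Equiv.Perm (Fin n)) (w : Fin n → ℂ), w ∈ U →
      DifferentiableAt ℂ (I σ) w :=
    fun σ w hw => (hhol σ).differentiableAt (hU.mem_nhds hw)
  have hψd : ∀ w ∈ U, DifferentiableAt ℂ
      (fun v => ∑ σ : Equiv.Perm (Fin n), ((Equiv.Perm.sign σ : ℤ) : ℂ) * I σ v) w :=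
    fun w hw => DifferentiableAt.fun_sum fun σ _ => (hdiffat σ w hw).const_mul _
  have hFd : ∀ (m : Fin n), ∀ w ∈ U, DifferentiableAt ℂ
      (fun v => ∑ σ : Equiv.Perm (Fin n),
        ((Equiv.Perm.sign σ : ℤ) : ℂ) * (lam (σ m) * I σ v)) w :=
    fun m w hw => DifferentiableAt.fun_sum fun σ _ =>
      ((hdiffat σ w hw).const_mul _).const_mul _
  set Ψ : ℂ := ∑ σ : Equiv.Perm (Fin n), ((Equiv.Perm.sign σ : ℤ) : ℂ) * I σ z with hΨ
  set Fz : Fin n → ℂ := fun m => ∑ σ : Equiv.Perm (Fin n),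
    ((Equiv.Perm.sign σ : ℤ) : ℂ) * (lam (σ m) * I σ z) with hFzdef
  have hFzj : ∀ m : Fin n, (∑ σ : Equiv.Perm (Fin n),
      ((Equiv.Perm.sign σ : ℤ) : ℂ) * (lam (σ m) * I σ z)) = Fz m := fun m => rfl
  have key : ∀ i : Fin n, partialDeriv i (partialDeriv i
      (fun w => ∑ σ : Equiv.Perm (Fin n), ((Equiv.Perm.sign σ : ℤ) : ℂ) * I σ w)) z
    = κ ^ 2 * ∑ j ∈ univ.erase i, ∑ k ∈ univ.erase i, Ψ / ((z i - z k) * (z i - z j))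
      - κ * ∑ j ∈ univ.erase i, (Fz i + Fz j) / (z i - z j)
      + κ * ∑ j ∈ univ.erase i, Ψ / (z i - z j) ^ 2
      + ∑ σ : Equiv.Perm (Fin n),
          ((Equiv.Perm.sign σ : ℤ) : ℂ) * (lam (σ i) * (lam (σ i) * I σ z)) := by
    intro i
    have hev : partialDeriv i (fun w => ∑ σ : Equiv.Perm (Fin n),
          ((Equiv.Perm.sign σ : ℤ) : ℂ) * I σ w)
        =ᶠ[nhds z] (fun w => (∑ σ : Equiv.Perm (Fin n),
            ((Equiv.Perm.sign σ : ℤ) : ℂ) * (lam (σ i) * I σ w))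
          - κ * ∑ j ∈ univ.erase i, (∑ σ : Equiv.Perm (Fin n),
              ((Equiv.Perm.sign σ : ℤ) : ℂ) * I σ w) / (w i - w j)) :=
      Filter.eventuallyEq_of_mem (hU.mem_nhds hz) (fun w hw => stepA hU hhol hKZ i w hw)
    have hstepA_z : partialDeriv i (fun w => ∑ σ : Equiv.Perm (Fin n),
        ((Equiv.Perm.sign σ : ℤ) : ℂ) * I σ w) z
        = Fz i - κ * ∑ k ∈ univ.erase i, Ψ / (z i - z k) := by
      rw [stepA hU hhol hKZ i z hz]
    have hstepF_z : partialDeriv i (fun w => ∑ σ : Equiv.Perm (Fin n),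
        ((Equiv.Perm.sign σ : ℤ) : ℂ) * (lam (σ i) * I σ w)) z
        = (∑ σ : Equiv.Perm (Fin n),
            ((Equiv.Perm.sign σ : ℤ) : ℂ) * (lam (σ i) * (lam (σ i) * I σ z)))
          - κ * ∑ j ∈ univ.erase i, Fz j / (z i - z j) := by
      rw [stepF hU hhol hKZ i z hz]
    have hdivpd : ∀ j ∈ univ.erase i,
        partialDeriv i (fun w => (∑ σ : Equiv.Perm (Fin n),
          ((Equiv.Perm.sign σ : ℤ) : ℂ) * I σ w) / (w i - w j)) z
        = (Fz i - κ * ∑ k ∈ univ.erase i, Ψ / (z i - z k)) / (z i - z j)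
          - Ψ / (z i - z j) ^ 2 := by
      intro j hj
      have hji : j ≠ i := (Finset.mem_erase.mp hj).1
      rw [pd_div_sub _ i j hji z (hψd z hz) (hzsep i j (Ne.symm hji)), hstepA_z]
    calc partialDeriv i (partialDeriv i (fun w => ∑ σ : Equiv.Perm (Fin n),
          ((Equiv.Perm.sign σ : ℤ) : ℂ) * I σ w)) z
        = partialDeriv i (fun w => (∑ σ : Equiv.Perm (Fin n),
              ((Equiv.Perm.sign σ : ℤ) : ℂ) * (lam (σ i) * I σ w))
            - κ * ∑ j ∈ univ.erase i, (∑ σ : Equiv.Perm (Fin n),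
                ((Equiv.Perm.sign σ : ℤ) : ℂ) * I σ w) / (w i - w j)) z := by
          rw [pd_congr_nhds i hev]
      _ = partialDeriv i (fun w => ∑ σ : Equiv.Perm (Fin n),
              ((Equiv.Perm.sign σ : ℤ) : ℂ) * (lam (σ i) * I σ w)) z
            - κ * ∑ j ∈ univ.erase i, partialDeriv i
              (fun w => (∑ σ : Equiv.Perm (Fin n),
                ((Equiv.Perm.sign σ : ℤ) : ℂ) * I σ w) / (w i - w j)) z :=
          by
          have hsub : ∀ j : Fin n, DifferentiableAt ℂ (fun w : Fin n → ℂ => w i - w j) z :=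
            fun j => ((hasFDerivAt_apply i z).differentiableAt).sub
              ((hasFDerivAt_apply j z).differentiableAt)
          have hfdiv : ∀ j ∈ univ.erase i, DifferentiableAt ℂ
              (fun w => (∑ σ : Equiv.Perm (Fin n),
                ((Equiv.Perm.sign σ : ℤ) : ℂ) * I σ w) / (w i - w j)) z :=
            fun j hj => by
              simp only [div_eq_mul_inv]
              exact (hψd z hz).mul (DifferentiableAt.inv (hsub j)
                (sub_ne_zero.mpr (hzsep i j (Ne.symm (Finset.mem_erase.mp hj).1))))
          exact pd_comb (univ.erase i) κ
            (fun w => ∑ σ : Equiv.Perm (Fin n),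
              ((Equiv.Perm.sign σ : ℤ) : ℂ) * (lam (σ i) * I σ w))
            (fun j w => (∑ σ : Equiv.Perm (Fin n),
              ((Equiv.Perm.sign σ : ℤ) : ℂ) * I σ w) / (w i - w j)) i z
            (hFd i z hz) hfdiv
      _ = ((∑ σ : Equiv.Perm (Fin n),
            ((Equiv.Perm.sign σ : ℤ) : ℂ) * (lam (σ i) * (lam (σ i) * I σ z)))
          - κ * ∑ j ∈ univ.erase i, Fz j / (z i - z j))
          - κ * ∑ j ∈ univ.erase i,
            ((Fz i - κ * ∑ k ∈ univ.erase i, Ψ / (z i - z k)) / (z i - z j)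
              - Ψ / (z i - z j) ^ 2) := by
          rw [hstepF_z, Finset.sum_congr rfl hdivpd]
      _ = κ ^ 2 * ∑ j ∈ univ.erase i,
            (∑ k ∈ univ.erase i, Ψ / (z i - z k)) / (z i - z j)
          - κ * ∑ j ∈ univ.erase i, (Fz i + Fz j) / (z i - z j)
          + κ * ∑ j ∈ univ.erase i, Ψ / (z i - z j) ^ 2
          + ∑ σ : Equiv.Perm (Fin n),
              ((Equiv.Perm.sign σ : ℤ) : ℂ) * (lam (σ i) * (lam (σ i) * I σ z)) :=
          comb_sum (univ.erase i) κ (Fz i) (∑ k ∈ univ.erase i, Ψ / (z i - z k)) Ψ _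
            Fz (fun j => z i - z j)
      _ = κ ^ 2 * ∑ j ∈ univ.erase i, ∑ k ∈ univ.erase i, Ψ / ((z i - z k) * (z i - z j))
          - κ * ∑ j ∈ univ.erase i, (Fz i + Fz j) / (z i - z j)
          + κ * ∑ j ∈ univ.erase i, Ψ / (z i - z j) ^ 2
          + ∑ σ : Equiv.Perm (Fin n),
              ((Equiv.Perm.sign σ : ℤ) : ℂ) * (lam (σ i) * (lam (σ i) * I σ z)) := by
          have hsd : ∀ j ∈ univ.erase i,
              (∑ k ∈ univ.erase i, Ψ / (z i - z k)) / (z i - z j)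
              = ∑ k ∈ univ.erase i, Ψ / ((z i - z k) * (z i - z j)) := by
            intro j _
            rw [Finset.sum_div]
            exact Finset.sum_congr rfl fun k _ => div_div _ _ _
          rw [Finset.sum_congr rfl hsd]
  rw [Finset.sum_congr rfl (fun i _ => key i),
    Finset.sum_add_distrib, Finset.sum_add_distrib, Finset.sum_sub_distrib,
    ← Finset.mul_sum, ← Finset.mul_sum, ← Finset.mul_sum]
  have hC : ∑ i : Fin n, ∑ j ∈ univ.erase i, (Fz i + Fz j) / (z i - z j) = 0 :=
    antisym_sum_zero _ (fun i j => by
      rw [show z j - z i = -(z i - z j) from by ring, div_neg, add_comm])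
  have hT : ∑ i : Fin n, ∑ j ∈ univ.erase i, ∑ k ∈ univ.erase i,
      Ψ / ((z i - z k) * (z i - z j))
      = ∑ i : Fin n, ∑ j ∈ univ.erase i, Ψ / (z i - z j) ^ 2 := by
    calc ∑ i : Fin n, ∑ j ∈ univ.erase i, ∑ k ∈ univ.erase i,
          Ψ / ((z i - z k) * (z i - z j))
        = ∑ i : Fin n, ∑ j ∈ univ.erase i, (Ψ / (z i - z j) ^ 2
            + ∑ k ∈ (univ.erase i).erase j,
              Ψ * ((z i - z k) * (z i - z j))⁻¹) := by
          refine Finset.sum_congr rfl fun i _ => Finset.sum_congr rfl fun j hj => ?_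
          rw [← Finset.add_sum_erase _ _ hj]
          simp only [div_eq_mul_inv, sq]
      _ = (∑ i : Fin n, ∑ j ∈ univ.erase i, Ψ / (z i - z j) ^ 2)
          + Ψ * ∑ i : Fin n, ∑ j ∈ univ.erase i, ∑ k ∈ (univ.erase i).erase j,
            ((z i - z k) * (z i - z j))⁻¹ := by
          simp only [Finset.sum_add_distrib, ← Finset.mul_sum]
      _ = ∑ i : Fin n, ∑ j ∈ univ.erase i, Ψ / (z i - z j) ^ 2 := by
          rw [triple_zero z hzsep, mul_zero, add_zero]
  have hL : ∑ i : Fin n, ∑ σ : Equiv.Perm (Fin n),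
      ((Equiv.Perm.sign σ : ℤ) : ℂ) * (lam (σ i) * (lam (σ i) * I σ z))
      = (∑ i : Fin n, lam i ^ 2) * Ψ := by
    rw [Finset.sum_comm]
    have hσ : ∀ σ : Equiv.Perm (Fin n), ∑ i : Fin n,
        ((Equiv.Perm.sign σ : ℤ) : ℂ) * (lam (σ i) * (lam (σ i) * I σ z))
        = (∑ i : Fin n, lam i ^ 2) * (((Equiv.Perm.sign σ : ℤ) : ℂ) * I σ z) := by
      intro σ
      calc ∑ i : Fin n, ((Equiv.Perm.sign σ : ℤ) : ℂ) * (lam (σ i) * (lam (σ i) * I σ z))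
          = ∑ i : Fin n, lam (σ i) ^ 2 * (((Equiv.Perm.sign σ : ℤ) : ℂ) * I σ z) :=
            Finset.sum_congr rfl fun i _ => by ring
        _ = (∑ i : Fin n, lam (σ i) ^ 2) * (((Equiv.Perm.sign σ : ℤ) : ℂ) * I σ z) := by
            rw [← Finset.sum_mul]
        _ = (∑ i : Fin n, lam i ^ 2) * (((Equiv.Perm.sign σ : ℤ) : ℂ) * I σ z) := by
            rw [Equiv.sum_comp σ (fun m => lam m ^ 2)]
    rw [Finset.sum_congr rfl (fun σ _ => hσ σ), ← Finset.mul_sum, hΨ]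
  rw [hC, hT, hL]
  ring
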